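/- arXiv:2005.07151 — 2 statements merged into one kernel-verified Lean document; each statement's English description precedes it below -/
import Mathlib

section
/- Let E be a real inner product space and let u, v ∈ E be nonzero vectors. Then sin(angle(u, v)) ≤ ‖u − v‖ / ‖u‖. -/
open InnerProductGeometry Real RealInnerProductSpace

/-- For nonzero vectors `u, v` in a real inner product space,
`sin(angle(u, v)) ≤ ‖u − v‖ / ‖u‖`. -/
theorem sin_angle_le_norm_sub_div_norm
    {E : Type*} [NormedAddCommGroup E] [InnerProductSpace ℝ E]
    (u v : E) (hu : u ≠ 0) (hv : v ≠ 0) :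
    Real.sin (angle u v) ≤ ‖u - v‖ / ‖u‖ := by
  have hu' : (0:ℝ) < ‖u‖ := norm_pos_iff.mpr hu
  have hv' : (0:ℝ) < ‖v‖ := norm_pos_iff.mpr hv
  have key := sin_angle_mul_norm_mul_norm u v
  rw [le_div_iff₀ hu']
  have h1 : Real.sin (angle u v) * ‖u‖ =
      √((inner ℝ u u : ℝ) * (inner ℝ v v : ℝ) - (inner ℝ u v : ℝ) * (inner ℝ u v : ℝ)) / ‖v‖ := by
    field_simp at key ⊢
    linarith [key]
  rw [h1, div_le_iff₀ hv']
  have hns : ‖u - v‖ ^ 2 = ‖u‖ ^ 2 - 2 * (inner ℝ u v : ℝ) + ‖v‖ ^ 2 := by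
    rw [norm_sub_sq_real]
  have hiu : (inner ℝ u u : ℝ) = ‖u‖ ^ 2 := real_inner_self_eq_norm_sq u
  have hiv : (inner ℝ v v : ℝ) = ‖v‖ ^ 2 := real_inner_self_eq_norm_sq v
  have h2 : (inner ℝ u u : ℝ) * (inner ℝ v v : ℝ) - (inner ℝ u v : ℝ) * (inner ℝ u v : ℝ) ≤ (‖u - v‖ * ‖v‖) ^ 2 := by
    nlinarith [sq_nonneg ((inner ℝ u v : ℝ) - ‖v‖ ^ 2)]
  calc √((inner ℝ u u : ℝ) * (inner ℝ v v : ℝ) - (inner ℝ u v : ℝ) * (inner ℝ u v : ℝ))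
      ≤ √((‖u - v‖ * ‖v‖) ^ 2) := Real.sqrt_le_sqrt h2
    _ = ‖u - v‖ * ‖v‖ := Real.sqrt_sq (by positivity)
end

section
/- Let E be a real inner product space and let u, v, u′, v′ ∈ E be nonzero vectors. Then |angle(u′, v′) − angle(u, v)| ≤ angle(u, u′) + angle(v, v′). -/
open InnerProductGeometry Real RealInnerProductSpace

private lemma angle_triangle_unit {E : Type*} [NormedAddCommGroup E]
    [InnerProductSpace ℝ E] (x y z : E) (hx : ‖x‖ = 1) (hy : ‖y‖ = 1) (hz : ‖z‖ = 1) :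
    angle x z ≤ angle x y + angle y z := by
  set α := angle x y with hα
  set β := angle y z with hβ
  have hα0 : 0 ≤ α := angle_nonneg x y
  have hβ0 : 0 ≤ β := angle_nonneg y z
  have hαπ : α ≤ π := angle_le_pi x y
  have hβπ : β ≤ π := angle_le_pi y z
  by_cases hsum : π ≤ α + β
  · exact le_trans (angle_le_pi x z) hsum
  push_neg at hsum
  have hcosα : Real.cos α = ⟪x, y⟫ := by
    rw [hα, cos_angle, hx, hy]; ring_nf
  have hcosβ : Real.cos β = ⟪y, z⟫ := by
    rw [hβ, cos_angle, hy, hz]; ring_nf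
  set p : E := x - ⟪x, y⟫ • y with hp
  set q : E := z - ⟪z, y⟫ • y with hq
  have hy2 : ⟪y, y⟫ = 1 := by
    rw [real_inner_self_eq_norm_sq, hy]; norm_num
  have hx2 : ⟪x, x⟫ = 1 := by
    rw [real_inner_self_eq_norm_sq, hx]; norm_num
  have hz2 : ⟪z, z⟫ = 1 := by
    rw [real_inner_self_eq_norm_sq, hz]; norm_num
  have hpq : ⟪p, q⟫ = ⟪x, z⟫ - ⟪x, y⟫ * ⟪y, z⟫ := by
    simp only [hp, hq, inner_sub_left, inner_sub_right, inner_smul_left, inner_smul_right,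
      RCLike.conj_to_real, hy2]
    rw [real_inner_comm z y, real_inner_comm y x]
    ring
  have hpnorm : ‖p‖ ^ 2 = 1 - ⟪x, y⟫ ^ 2 := by
    rw [← real_inner_self_eq_norm_sq]
    simp only [hp, inner_sub_left, inner_sub_right, inner_smul_left, inner_smul_right,
      RCLike.conj_to_real, hy2, hx2]
    rw [real_inner_comm y x]; ring
  have hqnorm : ‖q‖ ^ 2 = 1 - ⟪z, y⟫ ^ 2 := by
    rw [← real_inner_self_eq_norm_sq]
    simp only [hq, inner_sub_left, inner_sub_right, inner_smul_left, inner_smul_right,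
      RCLike.conj_to_real, hy2, hz2]
    rw [real_inner_comm y z]; ring
  have hsinα : ‖p‖ = Real.sin α := by
    have h1 : Real.sin α ^ 2 = ‖p‖ ^ 2 := by
      rw [hpnorm, Real.sin_sq, hcosα]
    have h2 : 0 ≤ Real.sin α := Real.sin_nonneg_of_nonneg_of_le_pi hα0 hαπ
    nlinarith [norm_nonneg p]
  have hsinβ : ‖q‖ = Real.sin β := by
    have h1 : Real.sin β ^ 2 = ‖q‖ ^ 2 := by
      rw [hqnorm, Real.sin_sq, hcosβ, real_inner_comm y z]
    have h2 : 0 ≤ Real.sin β := Real.sin_nonneg_of_nonneg_of_le_pi hβ0 hβπ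
    nlinarith [norm_nonneg q]
  have hineq : ⟪x, z⟫ ≥ Real.cos (α + β) := by
    have habs : |⟪p, q⟫| ≤ ‖p‖ * ‖q‖ := abs_real_inner_le_norm p q
    have := neg_abs_le ⟪p, q⟫
    have key : -(Real.sin α * Real.sin β) ≤ ⟪p, q⟫ := by
      rw [← hsinα, ← hsinβ]; linarith
    rw [Real.cos_add, hcosα, hcosβ]
    linarith [hpq, key]
  have hcosxz : Real.cos (angle x z) = ⟪x, z⟫ := by
    rw [cos_angle, hx, hz]; ring_nf
  by_contra hcon
  push_neg at hcon
  have h1 : Real.cos (angle x z) < Real.cos (α + β) := by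
    apply Real.cos_lt_cos_of_nonneg_of_le_pi (by positivity) (angle_le_pi x z) hcon
  rw [hcosxz] at h1
  linarith

private lemma angle_triangle' {E : Type*} [NormedAddCommGroup E]
    [InnerProductSpace ℝ E] (x y z : E) (hx : x ≠ 0) (hy : y ≠ 0) (hz : z ≠ 0) :
    angle x z ≤ angle x y + angle y z := by
  have hnx : (0:ℝ) < ‖x‖⁻¹ := inv_pos.mpr (norm_pos_iff.mpr hx)
  have hny : (0:ℝ) < ‖y‖⁻¹ := inv_pos.mpr (norm_pos_iff.mpr hy)
  have hnz : (0:ℝ) < ‖z‖⁻¹ := inv_pos.mpr (norm_pos_iff.mpr hz)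
  have hxu : ‖(‖x‖⁻¹ • x)‖ = 1 := by
    rw [norm_smul]; simp [norm_ne_zero_iff.mpr hx]
  have hyu : ‖(‖y‖⁻¹ • y)‖ = 1 := by
    rw [norm_smul]; simp [norm_ne_zero_iff.mpr hy]
  have hzu : ‖(‖z‖⁻¹ • z)‖ = 1 := by
    rw [norm_smul]; simp [norm_ne_zero_iff.mpr hz]
  have key := angle_triangle_unit (‖x‖⁻¹ • x) (‖y‖⁻¹ • y) (‖z‖⁻¹ • z) hxu hyu hzu
  simpa [angle_smul_left_of_pos, angle_smul_right_of_pos, hnx, hny, hnz] using key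

/-- The change of the angle between two (bone) directions is bounded by the sum of the
angle changes of the individual directions:
`|angle(u′, v′) − angle(u, v)| ≤ angle(u, u′) + angle(v, v′)`. -/
theorem abs_angle_sub_angle_le
    {E : Type*} [NormedAddCommGroup E] [InnerProductSpace ℝ E]
    (u v u' v' : E) (hu : u ≠ 0) (hv : v ≠ 0) (hu' : u' ≠ 0) (hv' : v' ≠ 0) :
    |angle u' v' - angle u v| ≤ angle u u' + angle v v' := by
  have h1 : angle u' v' ≤ angle u u' + angle u v + angle v v' := by
    calc angle u' v' ≤ angle u' u + angle u v' := angle_triangle' u' u v' hu' hu hv'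
      _ ≤ angle u' u + (angle u v + angle v v') :=
          add_le_add_right (angle_triangle' u v v' hu hv hv') _
      _ = angle u u' + angle u v + angle v v' := by rw [angle_comm u' u]; ring
  have h2 : angle u v ≤ angle u u' + angle u' v' + angle v v' := by
    calc angle u v ≤ angle u u' + angle u' v := angle_triangle' u u' v hu hu' hv
      _ ≤ angle u u' + (angle u' v' + angle v' v) :=
          add_le_add_right (angle_triangle' u' v' v hu' hv' hv) _
      _ = angle u u' + angle u' v' + angle v v' := by rw [angle_comm v' v]; ring
  rw [abs_sub_le_iff]
  constructor <;> linarith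
end
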